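/- For a normalized multinomial: let p ∈ Δ^n be a probability vector, X ∼ Mul_k(p) the normalized frequency vector of k i.i.d. draws from p, and v ∈ {±1}^n. Then for any even t ≤ k, E[⟨X - p, v⟩^t] ≤ (8t/k)^{t/2}. -/

import Mathlib

open MeasureTheory ProbabilityTheory Finset

/-- For `y ≥ 0` and even positive `t`: `y^t ≤ (t/e)^t * exp y`. -/
lemma aux_poly_le_exp_nonneg (t : ℕ) (ht0 : 0 < t) {y : ℝ} (hy : 0 ≤ y) :
    y ^ t ≤ ((t : ℝ) / Real.exp 1) ^ t * Real.exp y := by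
  have hT : (0 : ℝ) < t := by exact_mod_cast ht0
  have he : (0 : ℝ) < Real.exp 1 := Real.exp_pos 1
  have h1 : Real.exp 1 * (y / t) ≤ Real.exp (y / t) := by
    have := Real.add_one_le_exp (y / t - 1)
    have h2 : Real.exp (y / t - 1) = Real.exp (y / t) / Real.exp 1 := by
      rw [Real.exp_sub]
    rw [h2] at this
    calc Real.exp 1 * (y / t) = ((y / t - 1) + 1) * Real.exp 1 := by ring
    _ ≤ (Real.exp (y / t) / Real.exp 1) * Real.exp 1 := by
        apply mul_le_mul_of_nonneg_right this he.le
    _ = Real.exp (y / t) := by field_simp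
  have hnn : 0 ≤ Real.exp 1 * (y / t) := by positivity
  have h3 : (Real.exp 1 * (y / t)) ^ t ≤ Real.exp (y / t) ^ t :=
    pow_le_pow_left₀ hnn h1 t
  have h4 : Real.exp (y / t) ^ t = Real.exp y := by
    rw [← Real.exp_nat_mul]
    congr 1
    field_simp
  rw [h4] at h3
  calc y ^ t = ((t : ℝ) / Real.exp 1) ^ t * (Real.exp 1 * (y / t)) ^ t := by
        rw [← mul_pow]
        congr 1
        field_simp
  _ ≤ ((t : ℝ) / Real.exp 1) ^ t * Real.exp y := by
      apply mul_le_mul_of_nonneg_left h3 (by positivity)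

/-- Pointwise bound: for even positive `t`, `s > 0`:
`x^t ≤ (t/(e s))^t * (exp (s x) + exp (-(s x)))`. -/
lemma aux_poly_le_exp (t : ℕ) (ht0 : 0 < t) (ht : Even t) {s : ℝ} (hs : 0 < s) (x : ℝ) :
    x ^ t ≤ ((t : ℝ) / (Real.exp 1 * s)) ^ t *
      (Real.exp (s * x) + Real.exp (-(s * x))) := by
  have he : (0 : ℝ) < Real.exp 1 := Real.exp_pos 1
  have hC : (0 : ℝ) ≤ ((t : ℝ) / (Real.exp 1 * s)) ^ t := by positivity
  have key : ∀ x : ℝ, 0 ≤ x →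
      x ^ t ≤ ((t : ℝ) / (Real.exp 1 * s)) ^ t * Real.exp (s * x) := by
    intro x hx
    have hsx : 0 ≤ s * x := by positivity
    have h := aux_poly_le_exp_nonneg t ht0 hsx
    have hx' : x ^ t = (s * x) ^ t / s ^ t := by
      rw [mul_pow]
      field_simp
    rw [hx']
    rw [div_le_iff₀ (by positivity : (0:ℝ) < s ^ t)]
    calc (s * x) ^ t ≤ ((t : ℝ) / Real.exp 1) ^ t * Real.exp (s * x) := h
    _ = ((t : ℝ) / (Real.exp 1 * s)) ^ t * Real.exp (s * x) * s ^ t := by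
        have hpow : ((t : ℝ) / (Real.exp 1 * s)) ^ t * s ^ t = ((t : ℝ) / Real.exp 1) ^ t := by
          rw [← mul_pow]
          congr 1
          field_simp
        rw [← hpow]
        ring
  rcases le_or_gt 0 x with hx | hx
  · have h := key x hx
    have : (0:ℝ) ≤ ((t : ℝ) / (Real.exp 1 * s)) ^ t * Real.exp (-(s * x)) := by positivity
    nlinarith [Real.exp_pos (-(s*x))]
  · have hx' : (0:ℝ) ≤ -x := by linarith
    have h := key (-x) hx'
    have hxt : (-x) ^ t = x ^ t := ht.neg_pow x
    rw [hxt] at h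
    have hsx : s * -x = -(s * x) := by ring
    rw [hsx] at h
    nlinarith [Real.exp_pos (s*x), hC, Real.exp_pos (-(s*x))]

/-- Hoeffding-type bound for a finitely supported mean-zero distribution bounded by 2. -/
lemma aux_sum_exp_le (n : ℕ) (p : Fin n → ℝ) (hp0 : ∀ j, 0 ≤ p j) (hp1 : ∑ j, p j = 1)
    (y : Fin n → ℝ) (hy : ∀ j, |y j| ≤ 2) (hmean : ∑ j, p j * y j = 0) (s : ℝ) :
    ∑ j, p j * Real.exp (s * y j) ≤ Real.exp (2 * s ^ 2) := by
  set A := Real.exp (-(2 * s)) with hA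
  set B := Real.exp (2 * s) with hB
  have conv : ∀ j, Real.exp (s * y j) ≤ ((2 - y j) / 4) * A + ((2 + y j) / 4) * B := by
    intro j
    have h1 : |y j| ≤ 2 := hy j
    have ha : (0:ℝ) ≤ (2 - y j) / 4 := by
      rw [abs_le] at h1; linarith [h1.2]
    have hb : (0:ℝ) ≤ (2 + y j) / 4 := by
      rw [abs_le] at h1; linarith [h1.1]
    have hab : (2 - y j) / 4 + (2 + y j) / 4 = 1 := by ring
    have := convexOn_exp.2 (Set.mem_univ (-(2 * s))) (Set.mem_univ (2 * s)) ha hb hab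
    simp only [smul_eq_mul] at this
    have harg : (2 - y j) / 4 * -(2 * s) + (2 + y j) / 4 * (2 * s) = s * y j := by ring
    rw [harg] at this
    exact this
  have step1 : ∑ j, p j * Real.exp (s * y j)
      ≤ ∑ j, p j * (((2 - y j) / 4) * A + ((2 + y j) / 4) * B) := by
    apply Finset.sum_le_sum
    intro j _
    exact mul_le_mul_of_nonneg_left (conv j) (hp0 j)
  have step2 : ∑ j, p j * (((2 - y j) / 4) * A + ((2 + y j) / 4) * B)
      = (A + B) / 2 := by
    have : ∀ j, p j * (((2 - y j) / 4) * A + ((2 + y j) / 4) * B)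
        = (A / 4) * (2 * p j - p j * y j) + (B / 4) * (2 * p j + p j * y j) := by
      intro j; ring
    rw [Finset.sum_congr rfl (fun j _ => this j)]
    rw [Finset.sum_add_distrib, ← Finset.mul_sum, ← Finset.mul_sum]
    have h1 : ∑ j, (2 * p j - p j * y j) = 2 := by
      rw [Finset.sum_sub_distrib, ← Finset.mul_sum, hp1, hmean]; ring
    have h2 : ∑ j, (2 * p j + p j * y j) = 2 := by
      rw [Finset.sum_add_distrib, ← Finset.mul_sum, hp1, hmean]; ring
    rw [h1, h2]; ring
  have step3 : (A + B) / 2 ≤ Real.exp (2 * s ^ 2) := by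
    have hcosh : (A + B) / 2 = Real.cosh (2 * s) := by
      rw [Real.cosh_eq, hA, hB]; ring
    rw [hcosh]
    have := Real.cosh_le_exp_half_sq (2 * s)
    calc Real.cosh (2 * s) ≤ Real.exp ((2 * s) ^ 2 / 2) := this
    _ = Real.exp (2 * s ^ 2) := by ring_nf
  calc ∑ j, p j * Real.exp (s * y j) ≤ (A + B) / 2 := step1.trans (le_of_eq step2)
  _ ≤ Real.exp (2 * s ^ 2) := step3

/-- Integral of a function of a `Fin n`-valued random variable. -/
lemma aux_integral_comp {Ω : Type*} [MeasurableSpace Ω] (μ : Measure Ω)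
    [IsProbabilityMeasure μ] {n : ℕ} (W : Ω → Fin n) (hW : Measurable W) (g : Fin n → ℝ) :
    ∫ ω, g (W ω) ∂μ = ∑ j, (μ {ω | W ω = j}).toReal * g j := by
  have hmsets : ∀ j : Fin n, MeasurableSet {ω | W ω = j} := fun j =>
    hW (measurableSet_singleton j)
  have hpt : ∀ ω, g (W ω) = ∑ j, Set.indicator {ω | W ω = j} (fun _ => g j) ω := by
    intro ω
    rw [Finset.sum_congr rfl (fun j _ => Set.indicator_apply _ _ _)]
    simp only [Set.mem_setOf_eq]
    rw [Finset.sum_congr rfl (fun j (_ : j ∈ Finset.univ) => if_congr (eq_comm) rfl rfl)]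
    rw [Finset.sum_ite_eq' Finset.univ (W ω) (fun j => g j)]
    simp
  rw [integral_congr_ae (Filter.Eventually.of_forall hpt)]
  rw [integral_finset_sum]
  · apply Finset.sum_congr rfl
    intro j _
    rw [integral_indicator_const _ (hmsets j)]
    simp [mul_comm, measureReal_def]
  · intro j _
    exact (integrable_const (g j)).indicator (hmsets j)

/-- Moment bound for the normalized multinomial: if `X ~ Mul_k(p)` is the normalized frequency
vector of `k` i.i.d. draws `W₁, ..., W_k` from a distribution `p ∈ Δⁿ`, and `v ∈ {±1}ⁿ`, then
for any even `t ≤ k`, `E[⟨X - p, v⟩^t] ≤ (8t/k)^{t/2}`. -/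
theorem multinomial_moment_bound
    (Ω : Type*) [MeasurableSpace Ω] (μ : Measure Ω) [IsProbabilityMeasure μ]
    (n k t : ℕ) (hk : 0 < k) (ht : Even t) (ht0 : 0 < t) (htk : t ≤ k)
    (p : Fin n → ℝ) (hp0 : ∀ j, 0 ≤ p j) (hp1 : ∑ j, p j = 1)
    (v : Fin n → ℝ) (hv : ∀ j, v j = 1 ∨ v j = -1)
    (W : Fin k → Ω → Fin n)
    (hmeas : ∀ a, Measurable (W a))
    (hindep : iIndepFun W μ)
    (hlaw : ∀ a j, μ {ω | W a ω = j} = ENNReal.ofReal (p j)) :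
    ∫ ω, (∑ j, ((((Finset.univ.filter (fun a => W a ω = j)).card : ℝ) / k) - p j) * v j) ^ t ∂μ
      ≤ (8 * t / k : ℝ) ^ (t / 2) := by
  classical
  obtain ⟨m', hm'⟩ := ht
  have hm : t = 2 * m' := by omega
  have hm0 : 0 < m' := by omega
  have htdiv : t / 2 = m' := by omega
  set K : ℝ := (k : ℝ) with hK
  set T : ℝ := (t : ℝ) with hT
  have hKpos : (0 : ℝ) < K := by rw [hK]; exact_mod_cast hk
  have hTpos : (0 : ℝ) < T := by rw [hT]; exact_mod_cast ht0
  set mv : ℝ := ∑ j, p j * v j with hmv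
  set Y : Fin k → Ω → ℝ := fun a ω => v (W a ω) - mv with hY
  set S : Ω → ℝ := fun ω => ∑ a, Y a ω with hS
  -- basic bounds
  have hvabs : ∀ j, |v j| = 1 := by
    intro j; rcases hv j with h | h <;> rw [h] <;> norm_num
  have hmv_abs : |mv| ≤ 1 := by
    rw [hmv]
    calc |∑ j, p j * v j| ≤ ∑ j, |p j * v j| := Finset.abs_sum_le_sum_abs _ _
    _ = ∑ j, p j := by
        apply Finset.sum_congr rfl
        intro j _
        rw [abs_mul, hvabs j, abs_of_nonneg (hp0 j)]
        ring
    _ = 1 := hp1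
  have hYbound : ∀ a ω, |Y a ω| ≤ 2 := by
    intro a ω
    have h1 : |v (W a ω)| = 1 := hvabs _
    calc |Y a ω| = |v (W a ω) - mv| := rfl
    _ ≤ |v (W a ω)| + |mv| := abs_sub _ _
    _ ≤ 1 + 1 := by rw [h1]; linarith [hmv_abs]
    _ = 2 := by norm_num
  -- measurability / independence of Y
  have hg : ∀ a : Fin k, Measurable (fun j : Fin n => v j - mv) := fun _ =>
    measurable_of_countable _
  have hYmeas : ∀ a, Measurable (Y a) := fun a => (hg a).comp (hmeas a)
  have hYindep : iIndepFun Y μ :=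
    hindep.comp (fun _ (j : Fin n) => v j - mv) hg
  have hSmeas : Measurable S := by
    apply Finset.measurable_sum
    intro a _
    exact hYmeas a
  have hSbound : ∀ ω, |S ω| ≤ 2 * K := by
    intro ω
    calc |S ω| ≤ ∑ a, |Y a ω| := Finset.abs_sum_le_sum_abs _ _
    _ ≤ ∑ _a : Fin k, (2:ℝ) := Finset.sum_le_sum (fun a _ => hYbound a ω)
    _ = 2 * K := by simp [hK, mul_comm]
  -- mgf bound for each Y a
  have hmgfY : ∀ (a : Fin k) (u : ℝ), mgf (Y a) μ u ≤ Real.exp (2 * u ^ 2) := by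
    intro a u
    have hmean : ∑ j, p j * (v j - mv) = 0 := by
      have : ∑ j, p j * (v j - mv) = (∑ j, p j * v j) - (∑ j, p j) * mv := by
        rw [Finset.sum_mul, ← Finset.sum_sub_distrib]
        apply Finset.sum_congr rfl
        intro j _; ring
      rw [this, hp1, ← hmv]; ring
    have hybd : ∀ j, |v j - mv| ≤ 2 := by
      intro j
      calc |v j - mv| ≤ |v j| + |mv| := abs_sub _ _
      _ ≤ 1 + 1 := by rw [hvabs j]; linarith [hmv_abs]
      _ = 2 := by norm_num
    have hcomp0 : mgf (Y a) μ u
        = ∑ j, (μ {ω | W a ω = j}).toReal * Real.exp (u * (v j - mv)) :=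
      aux_integral_comp μ (W a) (hmeas a) (fun j => Real.exp (u * (v j - mv)))
    have hcomp : mgf (Y a) μ u = ∑ j, p j * Real.exp (u * (v j - mv)) := by
      rw [hcomp0]
      apply Finset.sum_congr rfl
      intro j _
      rw [hlaw a j, ENNReal.toReal_ofReal (hp0 j)]
    rw [hcomp]
    exact aux_sum_exp_le n p hp0 hp1 _ hybd hmean u
  -- mgf bound for S
  have hmgfS : ∀ u : ℝ, mgf S μ u ≤ Real.exp (2 * K * u ^ 2) := by
    intro u
    have hSsum : S = ∑ a, Y a := by
      funext ω; simp [hS, Finset.sum_apply]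
    rw [hSsum, hYindep.mgf_sum hYmeas]
    calc ∏ a, mgf (Y a) μ u ≤ ∏ _a : Fin k, Real.exp (2 * u ^ 2) := by
          apply Finset.prod_le_prod
          · intro a _; exact mgf_nonneg
          · intro a _; exact hmgfY a u
    _ = Real.exp (2 * u ^ 2) ^ k := by simp
    _ = Real.exp (2 * K * u ^ 2) := by
        rw [← Real.exp_nat_mul]
        congr 1
        rw [hK]; ring
  -- choose s
  set s : ℝ := Real.sqrt (T / (4 * K)) with hs
  have hspos : 0 < s := Real.sqrt_pos.2 (by positivity)
  have hs2 : s ^ 2 = T / (4 * K) := Real.sq_sqrt (by positivity)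
  set C : ℝ := (T / (Real.exp 1 * s)) ^ t with hC
  have hCpos : 0 < C := by
    rw [hC]
    apply pow_pos
    positivity
  -- integrability facts
  have hint_pow : Integrable (fun ω => S ω ^ t) μ := by
    apply Integrable.mono' (integrable_const ((2 * K) ^ t))
    · exact (hSmeas.pow_const t).aestronglyMeasurable
    · apply Filter.Eventually.of_forall
      intro ω
      rw [Real.norm_eq_abs, abs_pow]
      exact pow_le_pow_left₀ (abs_nonneg _) (hSbound ω) t
  have hint_exp : ∀ u : ℝ, Integrable (fun ω => Real.exp (u * S ω)) μ := by
    intro u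
    apply Integrable.mono' (integrable_const (Real.exp (|u| * (2 * K))))
    · exact (hSmeas.const_mul u).exp.aestronglyMeasurable
    · apply Filter.Eventually.of_forall
      intro ω
      rw [Real.norm_eq_abs, Real.abs_exp, Real.exp_le_exp]
      calc u * S ω ≤ |u * S ω| := le_abs_self _
      _ = |u| * |S ω| := abs_mul _ _
      _ ≤ |u| * (2 * K) := mul_le_mul_of_nonneg_left (hSbound ω) (abs_nonneg u)
  -- main moment bound for S
  have hmoment : ∫ ω, S ω ^ t ∂μ ≤ C * (2 * Real.exp (T / 2)) := by
    have hstep : ∫ ω, S ω ^ t ∂μ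
        ≤ ∫ ω, C * (Real.exp (s * S ω) + Real.exp (-(s * S ω))) ∂μ := by
      apply integral_mono hint_pow
      · apply Integrable.const_mul
        have h2 : (fun ω => Real.exp (s * S ω) + Real.exp (-(s * S ω)))
            = fun ω => Real.exp (s * S ω) + Real.exp ((-s) * S ω) := by
          funext ω; congr 2; ring
        rw [h2]
        exact (hint_exp s).add (hint_exp (-s))
      · intro ω
        exact aux_poly_le_exp t ht0 ⟨m', hm'⟩ hspos (S ω)
    have heq : ∫ ω, C * (Real.exp (s * S ω) + Real.exp (-(s * S ω))) ∂μ
        = C * (mgf S μ s + mgf S μ (-s)) := by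
      rw [integral_const_mul]
      congr 1
      have h2 : (fun ω => Real.exp (s * S ω) + Real.exp (-(s * S ω)))
          = fun ω => Real.exp (s * S ω) + Real.exp ((-s) * S ω) := by
        funext ω; congr 2; ring
      rw [h2, integral_add (hint_exp s) (hint_exp (-s))]
      rfl
    rw [heq] at hstep
    have hmgf_both : mgf S μ s + mgf S μ (-s) ≤ 2 * Real.exp (T / 2) := by
      have h1 := hmgfS s
      have h2 := hmgfS (-s)
      have hss : 2 * K * s ^ 2 = T / 2 := by
        rw [hs2]; field_simp; ring
      have hss' : 2 * K * (-s) ^ 2 = T / 2 := by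
        rw [neg_sq]; exact hss
      rw [hss] at h1
      rw [hss'] at h2
      linarith
    calc ∫ ω, S ω ^ t ∂μ ≤ C * (mgf S μ s + mgf S μ (-s)) := hstep
    _ ≤ C * (2 * Real.exp (T / 2)) :=
        mul_le_mul_of_nonneg_left hmgf_both hCpos.le
  -- numeric bound : C * (2 exp(T/2)) ≤ (8 T K)^m'
  have he1 : (2 : ℝ) ≤ Real.exp 1 := by
    have := Real.add_one_le_exp 1
    linarith
  have hnumeric : C * (2 * Real.exp (T / 2)) ≤ (8 * T * K) ^ m' := by
    have hCsq : (T / (Real.exp 1 * s)) ^ 2 = 4 * T * K / Real.exp 1 ^ 2 := by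
      rw [div_pow, mul_pow, hs2]
      rw [div_eq_div_iff (by positivity) (by positivity)]
      field_simp
    have hCeq : C = (4 * T * K / Real.exp 1 ^ 2) ^ m' := by
      rw [hC, hm, pow_mul, hCsq]
    have hexp : Real.exp (T / 2) = Real.exp 1 ^ m' := by
      rw [← Real.exp_nat_mul]
      congr 1
      rw [hT, hm]
      push_cast
      ring
    rw [hCeq, hexp]
    have hbase : (4 * T * K / Real.exp 1 ^ 2) * Real.exp 1 = 4 * T * K / Real.exp 1 := by
      have he0 : Real.exp 1 ≠ 0 := (Real.exp_pos 1).ne'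
      field_simp
    have hcomb : (4 * T * K / Real.exp 1 ^ 2) ^ m' * (2 * Real.exp 1 ^ m')
        = 2 * (4 * T * K / Real.exp 1) ^ m' := by
      rw [← hbase, mul_pow]
      ring
    rw [hcomb]
    have hXnn : (0:ℝ) ≤ 4 * T * K / Real.exp 1 := by positivity
    have hbase2 : (8 * T * K : ℝ) = (2 * Real.exp 1) * (4 * T * K / Real.exp 1) := by
      field_simp
      ring
    have hsplit : (8 * T * K : ℝ) ^ m' = (2 * Real.exp 1) ^ m' * (4 * T * K / Real.exp 1) ^ m' := by
      rw [hbase2, mul_pow]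
    rw [hsplit]
    apply mul_le_mul_of_nonneg_right _ (pow_nonneg hXnn m')
    calc (2:ℝ) ≤ 2 * Real.exp 1 := by nlinarith [Real.exp_pos 1]
    _ ≤ (2 * Real.exp 1) ^ m' := le_self_pow₀ (by nlinarith) hm0.ne'
  -- rewrite the integrand
  have hpt : ∀ ω, (∑ j, ((((Finset.univ.filter (fun a => W a ω = j)).card : ℝ) / k) - p j) * v j)
      = (1 / K) * S ω := by
    intro ω
    have hcount : ∑ j, (((Finset.univ.filter (fun a => W a ω = j)).card : ℝ)) * v j
        = ∑ a, v (W a ω) := by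
      rw [← Finset.sum_fiberwise Finset.univ (fun a => W a ω) (fun a => v (W a ω))]
      apply Finset.sum_congr rfl
      intro j _
      rw [Finset.sum_congr rfl (fun a ha => by
        rw [(Finset.mem_filter.1 ha).2])]
      rw [Finset.sum_const, nsmul_eq_mul]
    have hSalt : S ω = (∑ a, v (W a ω)) - K * mv := by
      rw [hS]
      simp only [hY]
      rw [Finset.sum_sub_distrib, Finset.sum_const, nsmul_eq_mul]
      simp [hK]
    rw [hSalt, ← hcount]
    rw [Finset.sum_congr rfl (fun j (_ : j ∈ Finset.univ) => (sub_mul _ _ _ : _ = _))]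
    rw [Finset.sum_sub_distrib]
    have h1 : ∑ j, (((Finset.univ.filter (fun a => W a ω = j)).card : ℝ) / k) * v j
        = (1 / K) * ∑ j, (((Finset.univ.filter (fun a => W a ω = j)).card : ℝ)) * v j := by
      rw [Finset.mul_sum]
      apply Finset.sum_congr rfl
      intro j _
      rw [hK]
      ring
    rw [h1, ← hmv]
    have hKne : K ≠ 0 := hKpos.ne'
    field_simp
  have hInt : ∫ ω, (∑ j, ((((Finset.univ.filter (fun a => W a ω = j)).card : ℝ) / k) - p j) * v j) ^ t ∂μ
      = (1 / K) ^ t * ∫ ω, S ω ^ t ∂μ := by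
    rw [← integral_const_mul]
    apply integral_congr_ae
    apply Filter.Eventually.of_forall
    intro ω
    simp only [hpt ω, mul_pow]
  rw [hInt, htdiv]
  calc (1 / K) ^ t * ∫ ω, S ω ^ t ∂μ
      ≤ (1 / K) ^ t * (C * (2 * Real.exp (T / 2))) := by
        apply mul_le_mul_of_nonneg_left hmoment (by positivity)
  _ ≤ (1 / K) ^ t * (8 * T * K) ^ m' := by
        apply mul_le_mul_of_nonneg_left hnumeric (by positivity)
  _ = (8 * T / K) ^ m' := by
        rw [hm, pow_mul]
        rw [← mul_pow]
        congr 1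
        rw [div_pow]
        field_simp
  _ = (8 * t / k : ℝ) ^ m' := by rw [hT, hK]
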